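/- Let α be a nonnegative random variable taking values in [0,H) (0 < H ≤ ∞) with absolutely continuous distribution function F, density f, survival function F̄ = 1 - F positive on [0,H), and finite mean Eα > c > 0. If α is IGFR (its generalized failure rate g(x) = x f(x)/F̄(x) is nondecreasing on (0,H)), then the n-firm Cournot game with payoffs π_i(x_1,…,x_n) = x_i·(E[(α - Σ_j x_j)_+] - c) has exactly one symmetric pure Nash equilibrium. -/

import Mathlib

open MeasureTheory Set Filter Function Topology
open scoped ENNReal NNReal

noncomputable section

/-- Expected payoff of firm `i` in the `n`-firm Cournot game with stochastic
demand intercept `α` and constant marginal cost `c`. -/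
def payoff {Ω : Type*} [MeasurableSpace Ω] (μ : Measure Ω) (α : Ω → ℝ) (c : ℝ)
    {n : ℕ} (x : Fin n → ℝ) (i : Fin n) : ℝ :=
  x i * ((∫ ω, max (α ω - ∑ j, x j) 0 ∂μ) - c)

/-- Pure Nash equilibrium with nonnegative outputs. -/
def IsNash {Ω : Type*} [MeasurableSpace Ω] (μ : Measure Ω) (α : Ω → ℝ) (c : ℝ)
    {n : ℕ} (x : Fin n → ℝ) : Prop :=
  (∀ i, 0 ≤ x i) ∧
    ∀ i : Fin n, ∀ y : ℝ, 0 ≤ y →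
      payoff μ α c (Function.update x i y) i ≤ payoff μ α c x i

/-- The mean residual demand (MRD) function `m(x) = (1/F̄(x)) ∫_x^H F̄(u) du`
(the survival function vanishes beyond `H`, so the integral may be taken over `(x,∞)`). -/
def mrd (F : ℝ → ℝ) (x : ℝ) : ℝ :=
  (∫ u in Ioi x, (1 - F u)) / (1 - F x)


namespace CournotAux

/-- The survival function determined by the density `f`. -/
def Fb (f : ℝ → ℝ) (x : ℝ) : ℝ := ∫ r in Ioi x, f r

/-- The expected positive part `∫ (r - t)⁺ f(r) dr` (expected inverse demand). -/
def Pl (f : ℝ → ℝ) (t : ℝ) : ℝ := ∫ r, max (r - t) 0 * f r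

variable {f : ℝ → ℝ}

theorem Fb_nonneg (h0 : ∀ x, 0 ≤ f x) (x : ℝ) : 0 ≤ Fb f x :=
  setIntegral_nonneg measurableSet_Ioi fun r _ => h0 r

theorem Fb_anti (h0 : ∀ x, 0 ≤ f x) (hi : Integrable f) : Antitone (Fb f) := by
  intro x y hxy
  exact setIntegral_mono_set hi.integrableOn (Eventually.of_forall fun r => h0 r)
    (HasSubset.Subset.eventuallyLE (Ioi_subset_Ioi hxy))

theorem Fb_eq (hi : Integrable f) (x : ℝ) :
    Fb f x = (∫ r, f r) - ∫ r in Iic x, f r := by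
  have := integral_add_compl (measurableSet_Iic (a := x)) hi
  rw [compl_Iic] at this
  rw [Fb, ← this]; ring

theorem Fb_cont (hi : Integrable f) : Continuous (Fb f) := by
  have h1 : Continuous fun x : ℝ => ∫ r in (0:ℝ)..x, f r := hi.continuous_primitive 0
  have h2 : ∀ x : ℝ, Fb f x = (∫ r, f r) - ((∫ r in Iic (0:ℝ), f r) + ∫ r in (0:ℝ)..x, f r) := by
    intro x
    rw [Fb_eq hi x]
    have := intervalIntegral.integral_Iic_sub_Iic (hi.integrableOn) (hi.integrableOn)
      (a := (0:ℝ)) (b := x)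
    rw [← this]; ring
  have : Fb f = fun x => (∫ r, f r) - ((∫ r in Iic (0:ℝ), f r) + ∫ r in (0:ℝ)..x, f r) :=
    funext h2
  rw [this]
  exact continuous_const.sub (continuous_const.add h1)


theorem int_max (h0 : ∀ x, 0 ≤ f x) (hi : Integrable f)
    (hri : Integrable (fun r => r * f r)) (t : ℝ) :
    Integrable (fun r => max (r - t) 0 * f r) := by
  refine Integrable.mono (hri.abs.add (hi.const_mul |t|)) ?_ ?_
  · refine AEStronglyMeasurable.mul ?_ hi.1
    exact (continuous_id.sub continuous_const).max continuous_const |>.aestronglyMeasurable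
  · refine Eventually.of_forall fun r => ?_
    have h1 : 0 ≤ max (r - t) 0 * f r := mul_nonneg (le_max_right _ _) (h0 r)
    have h2 : max (r - t) 0 * f r ≤ (|r| + |t|) * f r := by
      apply mul_le_mul_of_nonneg_right _ (h0 r)
      rcases le_or_gt (r - t) 0 with h | h
      · simpa [max_eq_right h] using add_nonneg (abs_nonneg r) (abs_nonneg t)
      · rw [max_eq_left h.le]
        cases abs_cases r with
        | inl hr => cases abs_cases t with
          | inl ht => linarith [hr.1, ht.1]
          | inr ht => linarith [hr.1, ht.1]
        | inr hr => cases abs_cases t with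
          | inl ht => linarith [hr.1, ht.1]
          | inr ht => linarith [hr.1, ht.1]
    simp only [Pi.add_apply]
    rw [Real.norm_eq_abs, Real.norm_eq_abs, abs_of_nonneg h1]
    calc max (r - t) 0 * f r ≤ (|r| + |t|) * f r := h2
      _ = |r| * f r + |t| * f r := by ring
      _ ≤ |r * f r| + |t| * f r := by
          gcongr
          rw [abs_mul]
          exact mul_le_mul_of_nonneg_left (le_abs_self _) (abs_nonneg r)
      _ ≤ |(|r * f r| + |t| * f r)| := le_abs_self _

theorem Pl_eq_setIntegral (t : ℝ) : Pl f t = ∫ r in Ioi t, (r - t) * f r := by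
  rw [Pl, ← integral_indicator measurableSet_Ioi]
  congr 1
  funext r
  by_cases h : r ∈ Ioi t
  · rw [indicator_of_mem h]
    rw [max_eq_left (by simp at h; linarith)]
  · rw [indicator_of_notMem h]
    simp only [mem_Ioi, not_lt] at h
    rw [max_eq_right (by linarith)]
    ring

theorem Pl_hasDeriv (hm : Measurable f) (h0 : ∀ x, 0 ≤ f x) (hi : Integrable f)
    (hri : Integrable (fun r => r * f r)) (t : ℝ) :
    HasDerivAt (Pl f) (-(Fb f t)) t := by
  rw [hasDerivAt_iff_tendsto_slope]
  have hFb : -(Fb f t) = ∫ r, (Ioi t).indicator (fun r => -f r) r := by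
    rw [integral_indicator measurableSet_Ioi, Fb, ← integral_neg]
  rw [hFb]
  have key : Tendsto (fun y => ∫ r, ((max (r - y) 0 - max (r - t) 0) / (y - t)) * f r)
      (𝓝[≠] t) (𝓝 (∫ r, (Ioi t).indicator (fun r => -f r) r)) := by
    apply tendsto_integral_filter_of_dominated_convergence (bound := f)
    · refine Eventually.of_forall fun y => ?_
      have : Continuous fun r : ℝ => (max (r - y) 0 - max (r - t) 0) / (y - t) :=
        (((continuous_id.sub continuous_const).max continuous_const).sub
          (((continuous_id.sub continuous_const).max continuous_const))).div_const _
      exact (this.measurable.mul hm).aestronglyMeasurable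
    · filter_upwards [eventually_mem_nhdsWithin] with y hy
      refine Eventually.of_forall fun r => ?_
      have hyt : y - t ≠ 0 := sub_ne_zero.mpr hy
      have hlip : |max (r - y) 0 - max (r - t) 0| ≤ |y - t| := by
        have := abs_max_sub_max_le_abs (r - y) (r - t) 0
        calc |max (r - y) 0 - max (r - t) 0| ≤ |r - y - (r - t)| := this
          _ = |y - t| := by rw [show r - y - (r - t) = -(y - t) by ring, abs_neg]
      rw [Real.norm_eq_abs, abs_mul, abs_div]
      calc |max (r - y) 0 - max (r - t) 0| / |y - t| * |f r| ≤ 1 * |f r| := by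
            apply mul_le_mul_of_nonneg_right _ (abs_nonneg _)
            rw [div_le_one (abs_pos.mpr hyt)]
            exact hlip
        _ = f r := by rw [one_mul, abs_of_nonneg (h0 r)]
    · exact hi
    · have hae : ∀ᵐ (r : ℝ), r ≠ t := by
        rw [ae_iff]
        have : {a : ℝ | ¬a ≠ t} = {t} := by ext a; simp
        rw [this]
        exact measure_singleton t
      filter_upwards [hae] with r hr
      rcases lt_or_gt_of_ne hr with hlt | hgt
      · -- r < t : eventually 0
        have hev : ∀ᶠ y in 𝓝[≠] t, ((max (r - y) 0 - max (r - t) 0) / (y - t)) * f r = 0 := by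
          filter_upwards [mem_nhdsWithin_of_mem_nhds (Ioi_mem_nhds hlt)] with y hy
          have h1 : max (r - y) 0 = 0 := max_eq_right (by simp only [mem_Ioi] at hy; linarith)
          have h2 : max (r - t) 0 = 0 := max_eq_right (by linarith)
          rw [h1, h2]
          ring
        have : (Ioi t).indicator (fun r => -f r) r = 0 :=
          indicator_of_notMem (by simp [mem_Ioi]; linarith) _
        rw [this]
        exact Tendsto.congr' (hev.mono fun y hy => hy.symm) tendsto_const_nhds
      · -- r > t : eventually -f r
        have hev : ∀ᶠ y in 𝓝[≠] t,
            ((max (r - y) 0 - max (r - t) 0) / (y - t)) * f r = -f r := by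
          have h1 : ∀ᶠ y in 𝓝[≠] t, y < r := mem_nhdsWithin_of_mem_nhds (Iio_mem_nhds hgt)
          filter_upwards [h1, eventually_mem_nhdsWithin] with y hy hy'
          have hyt : y - t ≠ 0 := sub_ne_zero.mpr hy'
          have h2 : max (r - y) 0 = r - y := max_eq_left (by linarith)
          have h3 : max (r - t) 0 = r - t := max_eq_left (by linarith)
          rw [h2, h3]
          field_simp
          ring
        have : (Ioi t).indicator (fun r => -f r) r = -f r :=
          indicator_of_mem (by simp [mem_Ioi]; linarith) _
        rw [this]
        exact Tendsto.congr' (hev.mono fun y hy => hy.symm) tendsto_const_nhds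
  refine key.congr' ?_
  filter_upwards [eventually_mem_nhdsWithin] with y hy
  have hyt : y - t ≠ 0 := sub_ne_zero.mpr hy
  rw [slope_def_field, Pl, Pl, ← integral_sub (int_max h0 hi hri y) (int_max h0 hi hri t),
    ← integral_div]
  congr 1
  funext r
  ring


-- new material

theorem Pl_cont (hm : Measurable f) (h0 : ∀ x, 0 ≤ f x) (hi : Integrable f)
    (hri : Integrable (fun r => r * f r)) : Continuous (Pl f) := by
  apply continuous_iff_continuousAt.mpr
  exact fun t => (Pl_hasDeriv hm h0 hi hri t).continuousAt

theorem Pl_nonneg (h0 : ∀ x, 0 ≤ f x) (t : ℝ) : 0 ≤ Pl f t :=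
  integral_nonneg fun r => mul_nonneg (le_max_right _ _) (h0 r)

theorem Pl_anti (h0 : ∀ x, 0 ≤ f x) (hi : Integrable f)
    (hri : Integrable (fun r => r * f r)) : Antitone (Pl f) := by
  intro a b hab
  apply integral_mono (int_max h0 hi hri b) (int_max h0 hi hri a)
  intro r
  have : max (r - b) 0 ≤ max (r - a) 0 := max_le_max (by linarith) le_rfl
  exact mul_le_mul_of_nonneg_right this (h0 r)

theorem Pl_tendsto_zero (hm : Measurable f) (h0 : ∀ x, 0 ≤ f x) (hi : Integrable f)
    (hri : Integrable (fun r => r * f r)) :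
    Tendsto (Pl f) atTop (𝓝 0) := by
  have h : Tendsto (fun t => ∫ r, max (r - t) 0 * f r) atTop (𝓝 (∫ (_ : ℝ), (0:ℝ))) := by
    apply tendsto_integral_filter_of_dominated_convergence (bound := fun r => max r 0 * f r)
    · exact Eventually.of_forall fun t => (int_max h0 hi hri t).1
    · filter_upwards [eventually_ge_atTop (0:ℝ)] with t ht
      refine Eventually.of_forall fun r => ?_
      rw [Real.norm_eq_abs, abs_of_nonneg (mul_nonneg (le_max_right _ _) (h0 r))]
      exact mul_le_mul_of_nonneg_right (max_le_max (by linarith) le_rfl) (h0 r)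
    · simpa using int_max h0 hi hri 0
    · refine Eventually.of_forall fun r => ?_
      have hev : ∀ᶠ t in atTop, max (r - t) 0 * f r = 0 := by
        filter_upwards [eventually_ge_atTop r] with t ht
        rw [max_eq_right (by linarith)]
        ring
      exact Tendsto.congr' (hev.mono fun t h => h.symm) tendsto_const_nhds
  simp only [integral_zero] at h
  exact h

theorem Fb_zero_Pl_zero (hm : Measurable f) (h0 : ∀ x, 0 ≤ f x) (hi : Integrable f)
    {t : ℝ} (hz : Fb f t = 0) : Pl f t = 0 := by
  rw [Pl_eq_setIntegral]
  have hf0 : ∀ᵐ r ∂(volume.restrict (Ioi t)), f r = 0 := by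
    have := (setIntegral_eq_zero_iff_of_nonneg_ae
      (Eventually.of_forall fun r => h0 r : (0:ℝ → ℝ) ≤ᵐ[volume.restrict (Ioi t)] f)
      hi.integrableOn).mp hz
    filter_upwards [this] with r hr using hr
  rw [← integral_zero ℝ ℝ (μ := volume.restrict (Ioi t))]
  apply integral_congr_ae
  filter_upwards [hf0] with r hr
  rw [hr, mul_zero]

theorem key_ident (h0 : ∀ x, 0 ≤ f x) (hi : Integrable f)
    (hri : Integrable (fun r => r * f r)) (s t : ℝ) :
    (t - s) * Fb f t + Pl f t = ∫ r in Ioi t, (r - s) * f r := by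
  have h1 : (t - s) * Fb f t = ∫ r in Ioi t, (t - s) * f r := by
    rw [Fb, integral_const_mul]
  have h2 : IntegrableOn (fun r => (r - t) * f r) (Ioi t) := by
    have : (fun r => (r - t) * f r) = fun r => r * f r - t * f r := by funext r; ring
    rw [this]
    exact (hri.sub (hi.const_mul t)).integrableOn
  rw [h1, Pl_eq_setIntegral, ← integral_add (hi.integrableOn.const_mul _) h2]
  congr 1
  funext r
  ring

theorem Ioi_split (h0 : ∀ x, 0 ≤ f x) (hi : Integrable f)
    (hri : Integrable (fun r => r * f r)) {a b : ℝ} (hab : a ≤ b) (s : ℝ) :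
    (∫ r in Ioi a, (r - s) * f r) =
      (∫ r in Ioc a b, (r - s) * f r) + ∫ r in Ioi b, (r - s) * f r := by
  have hint : IntegrableOn (fun r => (r - s) * f r) (Ioi a) := by
    have : (fun r => (r - s) * f r) = fun r => r * f r - s * f r := by funext r; ring
    rw [this]
    exact (hri.sub (hi.const_mul s)).integrableOn
  rw [← Ioc_union_Ioi_eq_Ioi hab]
  rw [setIntegral_union (Ioc_disjoint_Ioi le_rfl) measurableSet_Ioi
    (hint.mono_set (by rw [← Ioc_union_Ioi_eq_Ioi hab]; exact subset_union_left))
    (hint.mono_set (by rw [← Ioc_union_Ioi_eq_Ioi hab]; exact subset_union_right))]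

theorem ftc_Fb (hm : Measurable f) (h0 : ∀ x, 0 ≤ f x) (hi : Integrable f)
    (hri : Integrable (fun r => r * f r)) {a b : ℝ} (hab : a ≤ b) :
    Pl f a - Pl f b = ∫ u in Ioc a b, Fb f u := by
  have := intervalIntegral.integral_eq_sub_of_hasDerivAt
    (f := Pl f) (f' := fun u => -(Fb f u)) (a := a) (b := b)
    (fun u _ => Pl_hasDeriv hm h0 hi hri u)
    (((Fb_cont hi).neg.intervalIntegrable a b))
  rw [intervalIntegral.integral_neg] at this
  have h2 : ∫ u in a..b, Fb f u = ∫ u in Ioc a b, Fb f u :=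
    intervalIntegral.integral_of_le hab
  linarith [h2 ▸ this]

/-- The fundamental difference identity. -/
theorem Zdiff (hm : Measurable f) (h0 : ∀ x, 0 ≤ f x) (hi : Integrable f)
    (hri : Integrable (fun r => r * f r)) {a b : ℝ} (hab : a ≤ b) (s : ℝ) :
    (Pl f b - (b - s) * Fb f b) - (Pl f a - (a - s) * Fb f a) =
      ∫ u in Ioc a b, ((u - s) * f u - 2 * Fb f u) := by
  have hK : ((a - s) * Fb f a + Pl f a) - ((b - s) * Fb f b + Pl f b)
      = ∫ r in Ioc a b, (r - s) * f r := by
    rw [key_ident h0 hi hri s a, key_ident h0 hi hri s b, Ioi_split h0 hi hri hab s]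
    ring
  have hF : Pl f a - Pl f b = ∫ u in Ioc a b, Fb f u := ftc_Fb hm h0 hi hri hab
  have hint1 : IntegrableOn (fun r => (r - s) * f r) (Ioc a b) := by
    have : (fun r => (r - s) * f r) = fun r => r * f r - s * f r := by funext r; ring
    rw [this]
    exact (hri.sub (hi.const_mul s)).integrableOn
  have hint2 : IntegrableOn (fun u => 2 * Fb f u) (Ioc a b) :=
    ((continuous_const.mul (Fb_cont hi)).integrableOn_Ioc)
  rw [integral_sub hint1 hint2]
  have h3 : ∫ u in Ioc a b, 2 * Fb f u = 2 * ∫ u in Ioc a b, Fb f u := integral_const_mul 2 _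
  rw [h3]
  linarith

/-- strict negativity of integral of a pointwise negative function -/
theorem integral_neg_of_neg {W : ℝ → ℝ} {a b : ℝ} (hab : a < b)
    (hint : IntegrableOn W (Ioc a b)) (hneg : ∀ u ∈ Ioc a b, W u < 0) :
    (∫ u in Ioc a b, W u) < 0 := by
  have hnn : 0 ≤ᵐ[volume.restrict (Ioc a b)] fun u => -W u := by
    filter_upwards [ae_restrict_mem measurableSet_Ioc] with u hu
    simp only [Pi.zero_apply]
    exact neg_nonneg.mpr (hneg u hu).le
  have h1 : 0 < ∫ u in Ioc a b, -W u := by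
    rw [setIntegral_pos_iff_support_of_nonneg_ae hnn hint.neg]
    have hsub : Ioc a b ⊆ support (fun u => -W u) ∩ Ioc a b := by
      intro u hu
      exact ⟨by simp only [mem_support, ne_eq, neg_eq_zero]; exact (hneg u hu).ne, hu⟩
    calc (0:ℝ≥0∞) < volume (Ioc a b) := by
          rw [Real.volume_Ioc]
          exact ENNReal.ofReal_pos.mpr (by linarith)
      _ ≤ volume (support (fun u => -W u) ∩ Ioc a b) := measure_mono hsub
  have h2 : ∫ u in Ioc a b, -W u = -∫ u in Ioc a b, W u := integral_neg _
  linarith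


theorem int_shift (hi : Integrable f) (hri : Integrable (fun r => r * f r)) (s : ℝ) :
    Integrable (fun r => (r - s) * f r) := by
  have h : (fun r => (r - s) * f r) = fun r => r * f r - s * f r := by funext r; ring
  rw [h]; exact hri.sub (hi.const_mul s)

/-- The tail bound from IGFR. -/
theorem TB (hm : Measurable f) (h0 : ∀ x, 0 ≤ f x) (hi : Integrable f)
    (hri : Integrable (fun r => r * f r))
    (hig : ∀ u v : ℝ, 0 < u → u ≤ v → 0 < Fb f v → u * f u * Fb f v ≤ v * f v * Fb f u)
    {t : ℝ} (ht : 0 < t) (hFt : 0 < Fb f t) {γ : ℝ} (hγ : γ = t * f t / Fb f t)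
    (hγ1 : 1 < γ) : (γ - 1) * Pl f t ≤ t * Fb f t := by
  have step : ∀ T, t ≤ T → (γ - 1) * (Pl f t - Pl f T) ≤ t * Fb f t := by
    intro T hT
    have hmono : γ * (∫ u in Ioc t T, Fb f u) ≤ ∫ u in Ioc t T, u * f u := by
      rw [← integral_const_mul]
      apply setIntegral_mono_on
      · exact (continuous_const.mul (Fb_cont hi)).integrableOn_Ioc
      · exact hri.integrableOn
      · exact measurableSet_Ioc
      · intro u hu
        rcases eq_or_lt_of_le (Fb_nonneg h0 u) with hFu | hFu
        · rw [← hFu, mul_zero]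
          exact mul_nonneg (by linarith [hu.1]) (h0 u)
        · have hig' := hig t u ht hu.1.le hFu
          rw [hγ]
          rw [div_mul_eq_mul_div, div_le_iff₀ hFt]
          nlinarith [hig']
    have hK : (t * Fb f t + Pl f t) - (T * Fb f T + Pl f T) = ∫ u in Ioc t T, u * f u := by
      have h1 := key_ident h0 hi hri 0 t
      have h2 := key_ident h0 hi hri 0 T
      have h3 := Ioi_split h0 hi hri hT (0:ℝ)
      simp only [sub_zero] at h1 h2 h3
      linarith
    have hF : Pl f t - Pl f T = ∫ u in Ioc t T, Fb f u := ftc_Fb hm h0 hi hri hT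
    have hTFb : 0 ≤ T * Fb f T := mul_nonneg (by linarith) (Fb_nonneg h0 T)
    nlinarith [hmono, hK, hF]
  have hlim : Tendsto (fun T => (γ - 1) * (Pl f t - Pl f T)) atTop
      (𝓝 ((γ - 1) * (Pl f t - 0))) :=
    (tendsto_const_nhds.sub (Pl_tendsto_zero hm h0 hi hri)).const_mul _
  have hfin := le_of_tendsto hlim (eventually_atTop.mpr ⟨t, step⟩)
  simpa using hfin

/-- The pointwise inequality at points where `Z ≥ -c/2`. -/
theorem PW (hm : Measurable f) (h0 : ∀ x, 0 ≤ f x) (hi : Integrable f)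
    (hri : Integrable (fun r => r * f r))
    (hig : ∀ u v : ℝ, 0 < u → u ≤ v → 0 < Fb f v → u * f u * Fb f v ≤ v * f v * Fb f u)
    {c s u : ℝ} (hc : 0 < c) (hs : 0 ≤ s) (hsu : s ≤ u) (hu : 0 < u)
    (hFu : 0 < Fb f u) (hZ : -(c/2) ≤ Pl f u - c - (u - s) * Fb f u) :
    (u - s) * f u - 2 * Fb f u < 0 := by
  set g := u * f u / Fb f u with hgdef
  have hgFb : g * Fb f u = u * f u := div_mul_cancel₀ _ (ne_of_gt hFu)
  rcases lt_or_ge g 2 with hg2 | hg2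
  · have h1 : (u - s) * f u ≤ u * f u :=
      mul_le_mul_of_nonneg_right (by linarith) (h0 u)
    nlinarith [hgFb, hFu]
  · -- g ≥ 2
    have hfu : 0 < f u := by
      rcases eq_or_lt_of_le (h0 u) with h | h
      · exfalso; rw [hgdef, ← h] at hg2; simp at hg2; linarith
      · exact h
    have hTB : (g - 1) * Pl f u ≤ u * Fb f u :=
      TB hm h0 hi hri hig hu hFu hgdef (by linarith)
    have e1 : (u - s) * Fb f u ≤ Pl f u - c/2 := by linarith
    by_contra hcon
    push_neg at hcon
    have hg1 : (0:ℝ) < g - 1 := by linarith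
    have q0 : 2 * Fb f u * (Fb f u * (g-1)) ≤ (u - s) * f u * (Fb f u * (g-1)) :=
      mul_le_mul_of_nonneg_right (by linarith) (mul_nonneg hFu.le hg1.le)
    have q1 : (u - s) * Fb f u * (f u * (g-1)) ≤ (Pl f u - c/2) * (f u * (g-1)) :=
      mul_le_mul_of_nonneg_right e1 (mul_nonneg hfu.le hg1.le)
    have q2 : (g - 1) * Pl f u * f u ≤ u * Fb f u * f u :=
      mul_le_mul_of_nonneg_right hTB hfu.le
    have q3 : u * Fb f u * f u = g * Fb f u * Fb f u := by
      linear_combination Fb f u * hgFb.symm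
    have q4 : g * Fb f u * Fb f u ≤ 2*(g-1) * Fb f u * Fb f u := by
      nlinarith [sq_nonneg (Fb f u), hFu, hg2]
    have q5 : 0 < c/2 * f u * (g - 1) := by positivity
    nlinarith [q0, q1, q2, q3, q4, q5]


/-- strict decrease of Z over intervals where Z ≥ -c/2 -/
theorem core (hm : Measurable f) (h0 : ∀ x, 0 ≤ f x) (hi : Integrable f)
    (hri : Integrable (fun r => r * f r))
    (hig : ∀ u v : ℝ, 0 < u → u ≤ v → 0 < Fb f v → u * f u * Fb f v ≤ v * f v * Fb f u)
    {c s a b : ℝ} (hc : 0 < c) (hs : 0 ≤ s) (hsa : s ≤ a) (hab : a < b)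
    (hFb : 0 < Fb f b)
    (hZ : ∀ u ∈ Ioc a b, -(c/2) ≤ Pl f u - c - (u - s) * Fb f u) :
    Pl f b - c - (b - s) * Fb f b < Pl f a - c - (a - s) * Fb f a := by
  have hid := Zdiff hm h0 hi hri hab.le s
  have hneg : ∀ u ∈ Ioc a b, (u - s) * f u - 2 * Fb f u < 0 := by
    intro u hu
    have hFu : 0 < Fb f u := lt_of_lt_of_le hFb (Fb_anti h0 hi hu.2)
    exact PW hm h0 hi hri hig hc hs (le_of_lt (lt_of_le_of_lt hsa hu.1))
      (lt_of_le_of_lt (hs.trans hsa) hu.1) hFu (hZ u hu)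
  have hint : IntegrableOn (fun u => (u - s) * f u - 2 * Fb f u) (Ioc a b) :=
    ((int_shift hi hri s).integrableOn).sub
      (continuous_const.mul (Fb_cont hi)).integrableOn_Ioc
  have := integral_neg_of_neg hab hint hneg
  linarith

/-- single crossing property -/
theorem SC (hm : Measurable f) (h0 : ∀ x, 0 ≤ f x) (hi : Integrable f)
    (hri : Integrable (fun r => r * f r))
    (hig : ∀ u v : ℝ, 0 < u → u ≤ v → 0 < Fb f v → u * f u * Fb f v ≤ v * f v * Fb f u)
    {c s t1 t2 : ℝ} (hc : 0 < c) (hs : 0 ≤ s) (hst : s ≤ t1) (h12 : t1 < t2)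
    (hF2 : 0 < Fb f t2)
    (hZ1 : Pl f t1 - c - (t1 - s) * Fb f t1 ≤ 0) :
    Pl f t2 - c - (t2 - s) * Fb f t2 < 0 := by
  set Z : ℝ → ℝ := fun t => Pl f t - c - (t - s) * Fb f t with hZdef
  show Z t2 < 0
  by_contra hcon
  push_neg at hcon
  have hZcont : Continuous Z := by
    apply Continuous.sub
    · exact (Pl_cont hm h0 hi hri).sub continuous_const
    · exact (continuous_id.sub continuous_const).mul (Fb_cont hi)
  set A : Set ℝ := {t | t ∈ Icc t1 t2 ∧ Z t ≤ -(c/2)} with hAdef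
  by_cases hA : A.Nonempty
  · have hAclosed : IsClosed A := by
      apply IsClosed.inter isClosed_Icc
      exact isClosed_le hZcont continuous_const
    have hAbdd : BddAbove A := ⟨t2, fun x hx => hx.1.2⟩
    set τ := sSup A with hτdef
    have hτA : τ ∈ A := hAclosed.csSup_mem hA hAbdd
    have hτ2 : τ < t2 := by
      rcases lt_or_eq_of_le hτA.1.2 with h | h
      · exact h
      · exfalso
        have h2 := hτA.2
        rw [h] at h2
        simp only [hZdef] at h2 hcon
        linarith
    have hgt : ∀ u ∈ Ioc τ t2, -(c/2) ≤ Z u := by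
      intro u hu
      by_contra hlt
      push_neg at hlt
      have huA : u ∈ A := ⟨⟨hτA.1.1.trans hu.1.le, hu.2⟩, hlt.le⟩
      exact absurd (le_csSup hAbdd huA) (not_le.mpr hu.1)
    have hcore := core hm h0 hi hri hig hc hs (hst.trans hτA.1.1) hτ2 hF2 hgt
    have hτval := hτA.2
    simp only [hZdef] at hτval hcon hgt
    linarith
  · have hZge : ∀ u ∈ Ioc t1 t2, -(c/2) ≤ Z u := by
      intro u hu
      by_contra hlt
      push_neg at hlt
      exact hA ⟨u, ⟨⟨hu.1.le, hu.2⟩, hlt.le⟩⟩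
    have hcore := core hm h0 hi hri hig hc hs hst h12 hF2 hZge
    simp only [hZdef] at hcon
    linarith

/-- existence of a positive root of V with positive survival -/
theorem exist_root (hm : Measurable f) (h0 : ∀ x, 0 ≤ f x) (hi : Integrable f)
    (hri : Integrable (fun r => r * f r)) {c : ℝ} (hc : 0 < c) (hc0 : c < Pl f 0)
    {n : ℕ} (hn : 1 ≤ n) :
    ∃ t, 0 < t ∧ Pl f t - c - (t / n) * Fb f t = 0 ∧ 0 < Fb f t := by
  set V : ℝ → ℝ := fun t => Pl f t - c - (t / n) * Fb f t with hVdef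
  have hVcont : Continuous V := by
    apply Continuous.sub
    · exact (Pl_cont hm h0 hi hri).sub continuous_const
    · exact (continuous_id.div_const _).mul (Fb_cont hi)
  have hV0 : 0 < V 0 := by
    have : V 0 = Pl f 0 - c := by simp [hVdef]
    rw [this]; linarith
  obtain ⟨T, hT1, hT2⟩ : ∃ T, 0 < T ∧ Pl f T < c := by
    have h1 : ∀ᶠ T in atTop, Pl f T < c :=
      (Pl_tendsto_zero hm h0 hi hri).eventually_lt_const hc
    obtain ⟨T, hT⟩ := ((eventually_gt_atTop (0:ℝ)).and h1).exists
    exact ⟨T, hT.1, hT.2⟩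
  have hVT : V T < 0 := by
    have h2 : 0 ≤ (T / n) * Fb f T :=
      mul_nonneg (div_nonneg hT1.le (Nat.cast_nonneg n)) (Fb_nonneg h0 T)
    simp only [hVdef]
    linarith
  have hIVT : (0:ℝ) ∈ V '' (Ioo 0 T) := by
    apply intermediate_value_Ioo' hT1.le hVcont.continuousOn
    exact ⟨hVT, hV0⟩
  obtain ⟨t, ht, hVt⟩ := hIVT
  refine ⟨t, ht.1, hVt, ?_⟩
  rcases eq_or_lt_of_le (Fb_nonneg h0 t) with hFt | hFt
  · exfalso
    have hPt : Pl f t = 0 := Fb_zero_Pl_zero hm h0 hi hFt.symm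
    rw [hVdef] at hVt
    simp only at hVt
    rw [hPt, ← hFt] at hVt
    simp at hVt
    linarith
  · exact hFt

/-- uniqueness of the root of V -/
theorem uniq_root (hm : Measurable f) (h0 : ∀ x, 0 ≤ f x) (hi : Integrable f)
    (hri : Integrable (fun r => r * f r))
    (hig : ∀ u v : ℝ, 0 < u → u ≤ v → 0 < Fb f v → u * f u * Fb f v ≤ v * f v * Fb f u)
    {c : ℝ} (hc : 0 < c) {n : ℕ} (hn : 1 ≤ n) {t1 t2 : ℝ} (h1 : 0 < t1) (h12 : t1 < t2)
    (hV1 : Pl f t1 - c - (t1 / n) * Fb f t1 = 0)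
    (hV2 : Pl f t2 - c - (t2 / n) * Fb f t2 = 0) : False := by
  have hn' : (0:ℝ) < n := by exact_mod_cast hn
  have hF2 : 0 < Fb f t2 := by
    rcases eq_or_lt_of_le (Fb_nonneg h0 t2) with hFt | hFt
    · exfalso
      have hPt : Pl f t2 = 0 := Fb_zero_Pl_zero hm h0 hi hFt.symm
      rw [hPt, ← hFt] at hV2
      simp at hV2
      linarith
    · exact hFt
  have hP2 : c < Pl f t2 := by
    have : 0 < (t2 / n) * Fb f t2 := mul_pos (div_pos (h1.trans h12) hn') hF2
    linarith
  set γ := t2 * f t2 / Fb f t2 with hγdef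
  have hγn : γ < n + 1 := by
    by_contra hge
    push_neg at hge
    have hγ1 : 1 < γ := by linarith
    have hTB := TB hm h0 hi hri hig (h1.trans h12) hF2 hγdef hγ1
    have ht2Fb : t2 * Fb f t2 = n * (Pl f t2 - c) := by
      field_simp at hV1 hV2 ⊢
      linarith [hV2]
    have hPl2 : 0 < Pl f t2 := by linarith
    nlinarith [hTB, ht2Fb, hge, hPl2, hn', hc]
  -- integral identity
  have hK : (t1 * Fb f t1 + Pl f t1) - (t2 * Fb f t2 + Pl f t2) = ∫ u in Ioc t1 t2, u * f u := by
    have ha := key_ident h0 hi hri 0 t1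
    have hb := key_ident h0 hi hri 0 t2
    have hsp := Ioi_split h0 hi hri h12.le (0:ℝ)
    simp only [sub_zero] at ha hb hsp
    linarith
  have hFint : Pl f t1 - Pl f t2 = ∫ u in Ioc t1 t2, Fb f u := ftc_Fb hm h0 hi hri h12.le
  have hti : ∀ i ∈ ({t1, t2} : Set ℝ), True := fun _ _ => trivial
  have e1 : t1 * Fb f t1 = n * (Pl f t1 - c) := by
    field_simp at hV1
    linarith
  have e2 : t2 * Fb f t2 = n * (Pl f t2 - c) := by
    field_simp at hV2
    linarith
  have hzero : (∫ u in Ioc t1 t2, (u * f u - (n+1) * Fb f u)) = 0 := by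
    rw [integral_sub hri.integrableOn
      (show IntegrableOn (fun u => ((n:ℝ)+1) * Fb f u) (Ioc t1 t2) volume from
        (continuous_const.mul (Fb_cont hi)).integrableOn_Ioc)]
    have : ∫ u in Ioc t1 t2, (n+1) * Fb f u = (n+1) * ∫ u in Ioc t1 t2, Fb f u :=
      integral_const_mul _ _
    rw [this, ← hK, ← hFint]
    linarith
  have hneg : ∀ u ∈ Ioc t1 t2, u * f u - (n+1) * Fb f u < 0 := by
    intro u hu
    have hFu : 0 < Fb f u := lt_of_lt_of_le hF2 (Fb_anti h0 hi hu.2)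
    have hu0 : 0 < u := h1.trans hu.1
    have hig' := hig u t2 hu0 hu.2 hF2
    -- u * f u ≤ γ * Fb f u < (n+1) * Fb f u
    have : u * f u ≤ γ * Fb f u := by
      rw [hγdef, div_mul_eq_mul_div, le_div_iff₀ hF2]
      nlinarith [hig']
    nlinarith [this, hFu, hγn]
  have hint : IntegrableOn (fun u => u * f u - (n+1) * Fb f u) (Ioc t1 t2) :=
    hri.integrableOn.sub ((continuous_const.mul (Fb_cont hi)).integrableOn_Ioc)
  have := integral_neg_of_neg h12 hint hneg
  linarith


end CournotAux

open CournotAux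

section Bridge

/-- bridge facts -/
theorem bridge {Ω : Type*} [MeasurableSpace Ω] (μ : Measure Ω) [IsProbabilityMeasure μ]
    (α : Ω → ℝ) (hαmeas : Measurable α)
    (hαint : Integrable α μ)
    (f : ℝ → ℝ)
    (hfmeas : Measurable f) (hfnonneg : ∀ x, 0 ≤ f x) (hfint : Integrable f)
    (hF : ∀ x : ℝ, (μ {ω | α ω ≤ x}).toReal = ∫ u in Iic x, f u) :
    μ.map α = volume.withDensity (fun r => ENNReal.ofReal (f r)) := by
  have hfin : IsFiniteMeasure (volume.withDensity fun r => ENNReal.ofReal (f r)) := by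
    constructor
    rw [withDensity_apply _ MeasurableSet.univ, Measure.restrict_univ,
      ← ofReal_integral_eq_lintegral_ofReal hfint (Eventually.of_forall hfnonneg)]
    exact ENNReal.ofReal_lt_top
  have hprob : IsProbabilityMeasure (μ.map α) := Measure.isProbabilityMeasure_map hαmeas.aemeasurable
  refine Measure.ext_of_Iic _ _ (fun a => ?_)
  rw [Measure.map_apply hαmeas measurableSet_Iic]
  rw [withDensity_apply _ measurableSet_Iic]
  have h1 : ∫⁻ r in Iic a, ENNReal.ofReal (f r) = ENNReal.ofReal (∫ r in Iic a, f r) :=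
    (ofReal_integral_eq_lintegral_ofReal hfint.integrableOn
      (Eventually.of_forall hfnonneg : (0:ℝ → ℝ) ≤ᵐ[volume.restrict (Iic a)] f)).symm
  rw [h1, ← hF a, ENNReal.ofReal_toReal (measure_ne_top μ _)]
  rfl

theorem bridge_int_one {Ω : Type*} [MeasurableSpace Ω] (μ : Measure Ω) [IsProbabilityMeasure μ]
    (α : Ω → ℝ) (hαmeas : Measurable α)
    (f : ℝ → ℝ) (hfmeas : Measurable f) (hfnonneg : ∀ x, 0 ≤ f x) (hfint : Integrable f)
    (hmap : μ.map α = volume.withDensity (fun r => ENNReal.ofReal (f r))) :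
    (∫ r, f r) = 1 := by
  have h1 : (μ.map α) univ = 1 := by
    rw [Measure.map_apply hαmeas MeasurableSet.univ]
    simp
  rw [hmap, withDensity_apply _ MeasurableSet.univ, Measure.restrict_univ,
    ← ofReal_integral_eq_lintegral_ofReal hfint (Eventually.of_forall hfnonneg)] at h1
  have h2 := ENNReal.ofReal_eq_one.mp h1
  exact h2

theorem bridge_ri {Ω : Type*} [MeasurableSpace Ω] (μ : Measure Ω) [IsProbabilityMeasure μ]
    (α : Ω → ℝ) (hαmeas : Measurable α) (hαint : Integrable α μ)
    (f : ℝ → ℝ) (hfmeas : Measurable f) (hfnonneg : ∀ x, 0 ≤ f x)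
    (hmap : μ.map α = volume.withDensity (fun r => ENNReal.ofReal (f r))) :
    Integrable (fun r => r * f r) := by
  have h2 : Integrable id (μ.map α) :=
    (integrable_map_measure aestronglyMeasurable_id hαmeas.aemeasurable).mpr hαint
  rw [hmap] at h2
  rw [show (fun r => ENNReal.ofReal (f r)) = (fun r => ((f r).toNNReal : ℝ≥0∞)) from rfl] at h2
  rw [integrable_withDensity_iff_integrable_coe_smul hfmeas.real_toNNReal] at h2
  have : (fun r => ((f r).toNNReal : ℝ) • id r) = fun r => r * f r := by
    funext r
    simp [Real.coe_toNNReal _ (hfnonneg r), mul_comm]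
  rwa [this] at h2

theorem bridge_PP {Ω : Type*} [MeasurableSpace Ω] (μ : Measure Ω) [IsProbabilityMeasure μ]
    (α : Ω → ℝ) (hαmeas : Measurable α)
    (f : ℝ → ℝ) (hfmeas : Measurable f) (hfnonneg : ∀ x, 0 ≤ f x)
    (hmap : μ.map α = volume.withDensity (fun r => ENNReal.ofReal (f r))) (t : ℝ) :
    (∫ ω, max (α ω - t) 0 ∂μ) = Pl f t := by
  have hmeas : AEStronglyMeasurable (fun r : ℝ => max (r - t) 0) (μ.map α) :=
    ((continuous_id.sub continuous_const).max continuous_const).aestronglyMeasurable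
  rw [← integral_map hαmeas.aemeasurable hmeas, hmap]
  rw [show (fun r => ENNReal.ofReal (f r)) = (fun r => ((f r).toNNReal : ℝ≥0∞)) from rfl]
  rw [integral_withDensity_eq_integral_smul hfmeas.real_toNNReal]
  unfold Pl
  congr 1
  funext r
  rw [NNReal.smul_def, Real.coe_toNNReal _ (hfnonneg r), smul_eq_mul, mul_comm]


end Bridge

/-- If `α` is IGFR, then the Cournot game has exactly one symmetric pure Nash
equilibrium. -/
theorem stmt5 {Ω : Type*} [MeasurableSpace Ω] (μ : Measure Ω) [IsProbabilityMeasure μ]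
    (α : Ω → ℝ) (hαmeas : Measurable α)
    (H : EReal) (hH : 0 < H)
    (hval : ∀ᵐ ω ∂μ, 0 ≤ α ω ∧ (α ω : EReal) < H)
    (hαint : Integrable α μ)
    (F f : ℝ → ℝ)
    (hF : ∀ x : ℝ, F x = (μ {ω | α ω ≤ x}).toReal)
    (hfmeas : Measurable f) (hfnonneg : ∀ x, 0 ≤ f x) (hfint : Integrable f)
    (hdens : ∀ x : ℝ, F x = ∫ u in Iic x, f u)
    (hFbar : ∀ x : ℝ, 0 ≤ x → (x : EReal) < H → 0 < 1 - F x)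
    (c : ℝ) (hc : 0 < c) (hcE : c < ∫ ω, α ω ∂μ)
    (n : ℕ) (hn : 1 ≤ n)
    (hIGFR : ∀ x y : ℝ, 0 < x → x ≤ y → (y : EReal) < H →
      x * f x / (1 - F x) ≤ y * f y / (1 - F y)) :
    ∃! xs : ℝ, 0 < xs ∧ IsNash μ α c (fun _ : Fin n => xs) := by
  classical
  have hF' : ∀ x : ℝ, (μ {ω | α ω ≤ x}).toReal = ∫ u in Iic x, f u := fun x => by
    rw [← hF x, hdens x]
  have hmap := bridge μ α hαmeas hαint f hfmeas hfnonneg hfint hF'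
  have hint1 : (∫ r, f r) = 1 := bridge_int_one μ α hαmeas f hfmeas hfnonneg hfint hmap
  have hri : Integrable (fun r => r * f r) := bridge_ri μ α hαmeas hαint f hfmeas hfnonneg hmap
  have hPP : ∀ t, (∫ ω, max (α ω - t) 0 ∂μ) = Pl f t :=
    bridge_PP μ α hαmeas f hfmeas hfnonneg hmap
  have hFeq : ∀ x, 1 - F x = Fb f x := by
    intro x; rw [Fb_eq hfint x, hint1, hdens x]
  have hP0 : c < Pl f 0 := by
    rw [← hPP 0]
    have heq : ∫ ω, max (α ω - 0) 0 ∂μ = ∫ ω, α ω ∂μ := by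
      apply integral_congr_ae
      filter_upwards [hval] with ω hω
      rw [sub_zero, max_eq_left hω.1]
    rw [heq]; exact hcE
  have hn0 : (0:ℝ) < n := by exact_mod_cast hn
  have hn1 : (1:ℝ) ≤ n := by exact_mod_cast hn
  have hltH : ∀ t : ℝ, 0 < Fb f t → (t : EReal) < H := by
    intro t hFt
    by_contra hcon
    push_neg at hcon
    have hae : ∀ᵐ ω ∂μ, α ω ≤ t := by
      filter_upwards [hval] with ω hω
      have h2 : (α ω : EReal) < (t : EReal) := lt_of_lt_of_le hω.2 hcon
      exact (EReal.coe_lt_coe_iff.mp h2).le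
    have hμ1 : μ {ω | α ω ≤ t} = 1 := by
      have hc0 : μ {ω | α ω ≤ t}ᶜ = 0 := by
        rw [compl_setOf]
        exact ae_iff.mp hae
      have hmeasset : MeasurableSet {ω | α ω ≤ t} := hαmeas measurableSet_Iic
      have := measure_add_measure_compl hmeasset (μ := μ)
      rw [hc0, add_zero] at this
      rw [this]; exact measure_univ
    have hFt1 : F t = 1 := by rw [hF t, hμ1]; simp
    have := hFeq t
    rw [hFt1] at this
    simp at this
    linarith [this ▸ hFt]
  have hig : ∀ u v : ℝ, 0 < u → u ≤ v → 0 < Fb f v → u * f u * Fb f v ≤ v * f v * Fb f u := by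
    intro u v hu huv hFv
    have hFu : 0 < Fb f u := lt_of_lt_of_le hFv (Fb_anti hfnonneg hfint huv)
    have hvH : (v : EReal) < H := hltH v hFv
    have h := hIGFR u v hu huv hvH
    rw [hFeq u, hFeq v] at h
    exact (div_le_div_iff₀ hFu hFv).mp h
  -- derivative of the deviation payoff
  have hφd : ∀ σ y : ℝ, HasDerivAt (fun y => y * (Pl f (y + σ) - c))
      (Pl f (y + σ) - c - y * Fb f (y + σ)) y := by
    intro σ y
    have h1 : HasDerivAt (fun y : ℝ => y + σ) 1 y := (hasDerivAt_id y).add_const σ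
    have h2 : HasDerivAt (fun y : ℝ => Pl f (y + σ) - c) (-(Fb f (y + σ)) * 1) y :=
      (((Pl_hasDeriv hfmeas hfnonneg hfint hri (y + σ)).comp (h := fun y : ℝ => y + σ) y h1).sub_const c)
    have h3 : HasDerivAt (fun y => y * (Pl f (y + σ) - c))
        (1 * (Pl f (y + σ) - c) + y * (-(Fb f (y + σ)) * 1)) y := (hasDerivAt_id' y).mul h2
    convert h3 using 1
    ring
  -- payoff rewriting
  have hsum : ∀ (z y : ℝ) (i : Fin n),
      (∑ j, Function.update (fun _ : Fin n => z) i y j) = y + ((n:ℝ) - 1) * z := by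
    intro z y i
    rw [Finset.sum_update_of_mem (Finset.mem_univ i), Finset.sum_const, nsmul_eq_mul]
    have hcard : (Finset.univ \ {i}).card = n - 1 := by
      rw [Finset.sdiff_singleton_eq_erase, Finset.card_erase_of_mem (Finset.mem_univ i)]
      simp
    rw [hcard, Nat.cast_sub hn]
    simp
  have hpayoff_dev : ∀ (z y : ℝ) (i : Fin n),
      payoff μ α c (Function.update (fun _ : Fin n => z) i y) i
        = y * (Pl f (y + ((n:ℝ) - 1) * z) - c) := by
    intro z y i
    unfold payoff
    rw [hsum, hPP, Function.update_self]
  have hpayoff_const : ∀ (z : ℝ) (i : Fin n),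
      payoff μ α c (fun _ : Fin n => z) i = z * (Pl f ((n:ℝ) * z) - c) := by
    intro z i
    unfold payoff
    have : (∑ _j : Fin n, z) = (n:ℝ) * z := by
      rw [Finset.sum_const, nsmul_eq_mul]; simp
    rw [this, hPP]
  -- the root
  obtain ⟨t0, ht0, hroot, hFt0⟩ := exist_root hfmeas hfnonneg hfint hri hc hP0 hn
  have hxs : 0 < t0 / n := div_pos ht0 hn0
  set xs : ℝ := t0 / n with hxsdef
  set s : ℝ := ((n:ℝ) - 1) * xs with hsdef
  have hs0 : 0 ≤ s := mul_nonneg (by linarith) hxs.le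
  have hns : xs + s = t0 := by
    rw [hsdef, hxsdef]; field_simp; ring
  have hst0 : s ≤ t0 := by linarith
  have hZt0 : Pl f t0 - c - (t0 - s) * Fb f t0 = 0 := by
    have h : t0 - s = t0 / n := by rw [← hxsdef]; linarith
    rw [h]; exact hroot
  have hupper : ∀ t : ℝ, t0 < t → Pl f t - c - (t - s) * Fb f t < 0 := by
    intro t ht
    rcases eq_or_lt_of_le (Fb_nonneg hfnonneg t) with hFz | hFz
    · rw [Fb_zero_Pl_zero hfmeas hfnonneg hfint hFz.symm, ← hFz]
      simpa using hc
    · exact SC hfmeas hfnonneg hfint hri hig hc hs0 hst0 ht hFz (le_of_eq hZt0)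
  have hlower : ∀ t : ℝ, s ≤ t → t < t0 → 0 ≤ Pl f t - c - (t - s) * Fb f t := by
    intro t hst htt
    by_contra hcon
    push_neg at hcon
    have := SC hfmeas hfnonneg hfint hri hig hc hs0 hst htt hFt0 hcon.le
    linarith
  have hφcont : Continuous (fun y => y * (Pl f (y + s) - c)) :=
    continuous_iff_continuousAt.mpr fun y => (hφd s y).continuousAt
  have hmax : ∀ y : ℝ, 0 ≤ y → y * (Pl f (y + s) - c) ≤ xs * (Pl f (xs + s) - c) := by
    intro y hy
    rcases le_or_gt y xs with hyx | hyx
    · have hmono : MonotoneOn (fun y => y * (Pl f (y + s) - c)) (Icc 0 xs) := by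
        apply monotoneOn_of_deriv_nonneg (convex_Icc 0 xs) hφcont.continuousOn
        · intro u _
          exact (hφd s u).differentiableAt.differentiableWithinAt
        · intro u hu
          rw [interior_Icc] at hu
          rw [(hφd s u).deriv]
          have h2 : u + s < t0 := by linarith [hu.2]
          have h3 := hlower (u + s) (by linarith [hu.1]) h2
          have h4 : u + s - s = u := by ring
          rw [h4] at h3
          linarith
      exact hmono ⟨hy, hyx⟩ ⟨hxs.le, le_rfl⟩ hyx
    · have hanti : AntitoneOn (fun y => y * (Pl f (y + s) - c)) (Ici xs) := by
        apply antitoneOn_of_deriv_nonpos (convex_Ici xs) hφcont.continuousOn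
        · intro u _
          exact (hφd s u).differentiableAt.differentiableWithinAt
        · intro u hu
          rw [interior_Ici, mem_Ioi] at hu
          rw [(hφd s u).deriv]
          have h2 := hupper (u + s) (by linarith)
          have h4 : u + s - s = u := by ring
          rw [h4] at h2
          linarith
      exact hanti self_mem_Ici hyx.le hyx.le
  refine ⟨xs, ⟨hxs, ⟨fun _ => hxs.le, ?_⟩⟩, ?_⟩
  · intro i y hy
    rw [hpayoff_dev, hpayoff_const]
    have hnxs : (n:ℝ) * xs = xs + s := by rw [hsdef]; ring
    rw [hnxs]
    exact hmax y hy
  · rintro xs' ⟨hxs', _, hbest⟩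
    have hioi : Ioi (0:ℝ) ∈ 𝓝 xs' := Ioi_mem_nhds hxs'
    set s' : ℝ := ((n:ℝ) - 1) * xs' with hs'def
    have hloc : IsLocalMax (fun y => y * (Pl f (y + s') - c)) xs' := by
      filter_upwards [hioi] with y hy
      have h := hbest ⟨0, hn⟩ y (le_of_lt hy)
      rw [hpayoff_dev, hpayoff_const] at h
      have hnxs' : (n:ℝ) * xs' = xs' + s' := by rw [hs'def]; ring
      rw [hnxs'] at h
      exact h
    have hder0 := hloc.hasDerivAt_eq_zero (hφd s' xs')
    have ht' : (0:ℝ) < (n:ℝ) * xs' := mul_pos hn0 hxs'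
    have hroot' : Pl f ((n:ℝ) * xs') - c - (((n:ℝ) * xs') / n) * Fb f ((n:ℝ) * xs') = 0 := by
      have h1 : (n:ℝ) * xs' = xs' + s' := by rw [hs'def]; ring
      have h2 : ((n:ℝ) * xs') / n = xs' := by field_simp
      rw [h2, h1]
      exact hder0
    have hroot0 : Pl f t0 - c - (t0 / n) * Fb f t0 = 0 := hroot
    have heq : (n:ℝ) * xs' = t0 := by
      by_contra hne
      rcases lt_or_gt_of_ne hne with h | h
      · exact uniq_root hfmeas hfnonneg hfint hri hig hc hn ht' h hroot' hroot0
      · exact uniq_root hfmeas hfnonneg hfint hri hig hc hn ht0 h hroot0 hroot'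
    rw [hxsdef, ← heq]
    field_simp
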